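/- Let H be a real inner product space, K ⊆ H a convex set, 0 < ε < 1, and g ∈ H with ‖g‖ = 1. Suppose g₀ ∈ K satisfies ⟨g₀, g⟩ > ε and ‖g₀‖ ≤ ‖v‖ for every v ∈ K with ⟨v, g⟩ > ε (i.e. g₀ is a norm-minimizer over {v ∈ K : ⟨v, g⟩ > ε}). Then for every f ∈ K with ‖f‖ ≤ 1 and ⟨f, g⟩ > ε, one has ⟨g₀, f⟩ > ε². -/

import Mathlib

open scoped RealInnerProductSpace

/-- The norm-minimizer `g₀` over the slice `{v ∈ K : ⟪v, g⟫ > ε}` of a convex set `K`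
has inner product more than `ε²` with every `f ∈ K` of norm at most 1 in that slice. -/
theorem norm_minimizer_covering {H : Type*} [NormedAddCommGroup H] [InnerProductSpace ℝ H]
    (K : Set H) (hK : Convex ℝ K)
    (ε : ℝ) (hε0 : 0 < ε) (hε1 : ε < 1)
    (g : H) (hg : ‖g‖ = 1)
    (g₀ : H) (hg₀K : g₀ ∈ K) (hg₀g : ε < ⟪g₀, g⟫)
    (hmin : ∀ v ∈ K, ε < ⟪v, g⟫ → ‖g₀‖ ≤ ‖v‖) :
    ∀ f ∈ K, ‖f‖ ≤ 1 → ε < ⟪f, g⟫ → ε ^ 2 < ⟪g₀, f⟫ := by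
  intro f hfK hf1 hfg
  -- first-order optimality: for 0 < t ≤ 1, the point (1-t)•g₀ + t•f is in the slice
  have key : ∀ t : ℝ, 0 < t → t ≤ 1 → 0 ≤ 2 * ⟪g₀, f - g₀⟫ + t * ‖f - g₀‖ ^ 2 := by
    intro t ht0 ht1
    set v := (1 - t) • g₀ + t • f with hv
    have hvK : v ∈ K := hK hg₀K hfK (by linarith) ht0.le (by ring)
    have hvg : ε < ⟪v, g⟫ := by
      have : ⟪v, g⟫ = (1 - t) * ⟪g₀, g⟫ + t * ⟪f, g⟫ := by
        simp [hv, inner_add_left, real_inner_smul_left]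
      rw [this]
      nlinarith
    have hle : ‖g₀‖ ≤ ‖v‖ := hmin v hvK hvg
    have hv2 : v = g₀ + t • (f - g₀) := by
      rw [hv]; module
    have hnorm : ‖v‖ ^ 2 = ‖g₀‖ ^ 2 + 2 * (t * ⟪g₀, f - g₀⟫) + t ^ 2 * ‖f - g₀‖ ^ 2 := by
      rw [hv2, norm_add_sq_real, real_inner_smul_right, norm_smul]
      simp [mul_pow, abs_of_pos ht0]
    have hsq : ‖g₀‖ ^ 2 ≤ ‖v‖ ^ 2 := pow_le_pow_left₀ (norm_nonneg _) hle 2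
    have h0 : 0 ≤ 2 * (t * ⟪g₀, f - g₀⟫) + t ^ 2 * ‖f - g₀‖ ^ 2 := by
      rw [hnorm] at hsq; linarith
    nlinarith
  -- take t → 0⁺: 0 ≤ ⟪g₀, f - g₀⟫
  have h1 : 0 ≤ ⟪g₀, f - g₀⟫ := by
    by_contra h
    push_neg at h
    set c := -(2 * ⟪g₀, f - g₀⟫) with hc
    have hc0 : 0 < c := by simp [hc]; linarith
    set D := ‖f - g₀‖ ^ 2 with hD
    have hD0 : 0 ≤ D := by positivity
    rcases eq_or_lt_of_le hD0 with hD0' | hD0'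
    · have := key 1 one_pos le_rfl
      rw [← hD0'] at this
      linarith
    · set t := min 1 (c / (2 * D)) with ht
      have ht0 : 0 < t := lt_min one_pos (by positivity)
      have := key t ht0 (min_le_left _ _)
      have htD : t * D ≤ c / 2 := by
        calc t * D ≤ (c / (2 * D)) * D := by
              exact mul_le_mul_of_nonneg_right (min_le_right _ _) hD0
          _ = c / 2 := by field_simp
      linarith
  have h2 : ‖g₀‖ ^ 2 ≤ ⟪g₀, f⟫ := by
    have : ⟪g₀, f - g₀⟫ = ⟪g₀, f⟫ - ‖g₀‖ ^ 2 := by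
      rw [inner_sub_right, real_inner_self_eq_norm_sq]
    linarith [this ▸ h1]
  have h3 : ε < ‖g₀‖ := by
    have := real_inner_le_norm g₀ g
    rw [hg, mul_one] at this
    linarith
  nlinarith
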